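/- arXiv:math/0403109 — 2 statements merged into one kernel-verified Lean document; each statement's English description precedes it below -/
import Mathlib

section
/- If f is a continuous complex-valued integrable function on ℝⁿ, then for every α > 0 and every x ∈ ℝⁿ, the Gauss mean of the inverse Fourier transform of f̂ equals the Weierstrass convolution: ∫_{ℝⁿ} f̂(ξ) exp(2πi x·ξ) G_α(ξ) dξ = (W_α * f)(x). -/
open Real MeasureTheory

theorem gauss_mean_eq_weierstrass_conv (n : ℕ)
    (f : EuclideanSpace ℝ (Fin n) → ℂ) (hf : Continuous f) (hi : Integrable f)
    (α : ℝ) (hα : 0 < α) (x : EuclideanSpace ℝ (Fin n)) :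
    ∫ ξ : EuclideanSpace ℝ (Fin n),
        (∫ y : EuclideanSpace ℝ (Fin n),
            f y * Complex.exp (-(2 * (Real.pi : ℂ) * Complex.I * ((inner ℝ y ξ : ℝ) : ℂ))))
          * Complex.exp (2 * (Real.pi : ℂ) * Complex.I * ((inner ℝ x ξ : ℝ) : ℂ))
          * (Real.exp (-(4 * Real.pi ^ 2 * α * ‖ξ‖ ^ 2)) : ℝ)
      = ∫ y : EuclideanSpace ℝ (Fin n),
          f y * (((4 * Real.pi * α) ^ (-(n : ℝ) / 2)
            * Real.exp (-‖x - y‖ ^ 2 / (4 * α)) : ℝ) : ℂ) := by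
  set b : ℂ := ((4 * Real.pi ^ 2 * α : ℝ) : ℂ)
  have hb : 0 < b.re := by
    simp only [b, Complex.ofReal_re]
    positivity
  set c : ℂ := 2 * (Real.pi : ℂ) * Complex.I
  -- rewrite the LHS integrand
  have key : ∀ ξ : EuclideanSpace ℝ (Fin n),
      (∫ y : EuclideanSpace ℝ (Fin n), f y * Complex.exp (-(c * ((inner ℝ y ξ : ℝ) : ℂ))))
          * Complex.exp (c * ((inner ℝ x ξ : ℝ) : ℂ))
          * (Real.exp (-(4 * Real.pi ^ 2 * α * ‖ξ‖ ^ 2)) : ℝ)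
      = ∫ y : EuclideanSpace ℝ (Fin n), f y * Complex.exp (-b * ‖ξ‖ ^ 2 + c * ((inner ℝ (x - y) ξ : ℝ) : ℂ)) := by
    intro ξ
    rw [← MeasureTheory.integral_mul_const, ← MeasureTheory.integral_mul_const]
    congr 1 with y
    rw [mul_assoc, mul_assoc]
    congr 1
    rw [Complex.ofReal_exp, ← Complex.exp_add, ← Complex.exp_add]
    congr 1
    have : (inner ℝ (x - y) ξ : ℝ) = inner ℝ x ξ - inner ℝ y ξ := inner_sub_left x y ξ
    rw [this]
    simp only [b, c]
    push_cast
    ring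
  rw [show (fun ξ : EuclideanSpace ℝ (Fin n) => (∫ y : EuclideanSpace ℝ (Fin n), f y * Complex.exp (-(c * ((inner ℝ y ξ : ℝ) : ℂ)))) * Complex.exp (c * ((inner ℝ x ξ : ℝ) : ℂ)) * (Real.exp (-(4 * Real.pi ^ 2 * α * ‖ξ‖ ^ 2)) : ℝ)) = (fun ξ : EuclideanSpace ℝ (Fin n) => ∫ y : EuclideanSpace ℝ (Fin n), f y * Complex.exp (-b * ‖ξ‖ ^ 2 + c * ((inner ℝ (x - y) ξ : ℝ) : ℂ))) from funext key]
  -- Fubini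
  have hcont : Continuous fun p : (EuclideanSpace ℝ (Fin n)) × EuclideanSpace ℝ (Fin n) =>
      f p.2 * Complex.exp (-b * ‖p.1‖ ^ 2 + c * ((inner ℝ (x - p.2) p.1 : ℝ) : ℂ)) := by
    apply Continuous.mul (hf.comp continuous_snd)
    apply Complex.continuous_exp.comp
    apply Continuous.add
    · exact continuous_const.mul
        ((Complex.continuous_ofReal.comp (continuous_norm.comp continuous_fst)).pow 2)
    · exact continuous_const.mul
        (Complex.continuous_ofReal.comp
          (((continuous_const.sub continuous_snd).inner continuous_fst)))
  have hint : Integrable (fun p : (EuclideanSpace ℝ (Fin n)) × EuclideanSpace ℝ (Fin n) =>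
      f p.2 * Complex.exp (-b * ‖p.1‖ ^ 2 + c * ((inner ℝ (x - p.2) p.1 : ℝ) : ℂ)))
      (volume.prod volume) := by
    have hg : Integrable (fun ξ : EuclideanSpace ℝ (Fin n) => Real.exp (-b.re * ‖ξ‖ ^ 2)) :=
      GaussianFourier.integrable_cexp_neg_mul_sq_norm_add (by exact_mod_cast hb) 0 (0 : EuclideanSpace ℝ (Fin n))
        |>.norm.congr (by
          filter_upwards with ξ
          simp only [Complex.norm_exp, Complex.add_re, Complex.neg_re,
            Complex.mul_re, ← Complex.ofReal_pow, Complex.ofReal_re, Complex.ofReal_im, b]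
          norm_num)
    have hprod : Integrable (fun p : (EuclideanSpace ℝ (Fin n)) × EuclideanSpace ℝ (Fin n) => Real.exp (-b.re * ‖p.1‖ ^ 2) * ‖f p.2‖)
        (volume.prod volume) := hg.mul_prod hi.norm
    refine hprod.mono' hcont.aestronglyMeasurable ?_
    filter_upwards with p
    rw [norm_mul, Complex.norm_exp]
    have hre : (-b * ‖p.1‖ ^ 2 + c * ((inner ℝ (x - p.2) p.1 : ℝ) : ℂ)).re
        = -b.re * ‖p.1‖ ^ 2 := by
      simp only [Complex.add_re, Complex.neg_re, Complex.mul_re, Complex.mul_im,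
        ← Complex.ofReal_pow, Complex.ofReal_re, Complex.ofReal_im, b, c]
      simp [Complex.I_re, Complex.I_im]
    rw [hre]
    exact le_of_eq (mul_comm _ _)
  rw [MeasureTheory.integral_integral_swap hint]
  -- evaluate the inner Gaussian integral
  congr 1 with y
  rw [MeasureTheory.integral_const_mul]
  congr 1
  have := GaussianFourier.integral_cexp_neg_mul_sq_norm_add (V := EuclideanSpace ℝ (Fin n))
    (by exact_mod_cast hb) c (x - y)
  rw [this]
  have hrank : (Module.finrank ℝ (EuclideanSpace ℝ (Fin n)) : ℂ) = (n : ℂ) := by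
    simp
  rw [hrank]
  -- now pure computation
  have h4πα : (0:ℝ) < 4 * Real.pi * α := by positivity
  have h1 : (Real.pi : ℂ) / b = ((1 / (4 * Real.pi * α) : ℝ) : ℂ) := by
    push_cast [b]
    rw [div_eq_div_iff]
    · ring
    · simp [Real.pi_ne_zero, hα.ne']
    · exact mul_ne_zero (mul_ne_zero (by norm_num) (Complex.ofReal_ne_zero.mpr Real.pi_ne_zero)) (Complex.ofReal_ne_zero.mpr hα.ne')
  have h2 : c ^ 2 * (‖x - y‖ : ℂ) ^ 2 / (4 * b)
      = ((-‖x - y‖ ^ 2 / (4 * α) : ℝ) : ℂ) := by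
    have : c ^ 2 = -(4 * (Real.pi : ℂ) ^ 2) := by
      simp [c]; ring_nf; rw [Complex.I_sq]; ring
    rw [this]
    push_cast [b]
    rw [div_eq_div_iff]
    · ring
    · simp [Real.pi_ne_zero, hα.ne']
    · exact mul_ne_zero (by norm_num) (Complex.ofReal_ne_zero.mpr hα.ne')
  rw [h1, h2, ← Complex.ofReal_exp,
    show ((n : ℂ) / 2) = (((n : ℝ) / 2 : ℝ) : ℂ) by push_cast; ring,
    ← Complex.ofReal_cpow (by positivity) ((n : ℝ) / 2), ← Complex.ofReal_mul]
  congr 2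
  rw [one_div, Real.inv_rpow h4πα.le, ← Real.rpow_neg h4πα.le, neg_div]
end

section
/- Fourier inversion via Gauss summability: if f is a bounded continuous complex-valued integrable function on ℝⁿ, then for every x ∈ ℝⁿ, lim_{α → 0⁺} ∫_{ℝⁿ} f̂(ξ) exp(2πi x·ξ) G_α(ξ) dξ = f(x). -/
open Real MeasureTheory Filter Complex

open scoped RealInnerProductSpace FourierTransform

theorem fourier_inversion_gauss_summability (n : ℕ)
    (f : EuclideanSpace ℝ (Fin n) → ℂ) (hf : Continuous f)
    (hb : ∃ M : ℝ, ∀ x, ‖f x‖ ≤ M) (hi : Integrable f)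
    (x : EuclideanSpace ℝ (Fin n)) :
    Tendsto (fun α : ℝ =>
        ∫ ξ : EuclideanSpace ℝ (Fin n),
          (∫ y : EuclideanSpace ℝ (Fin n),
              f y * Complex.exp (-(2 * (Real.pi : ℂ) * Complex.I * ((inner ℝ y ξ : ℝ) : ℂ))))
            * Complex.exp (2 * (Real.pi : ℂ) * Complex.I * ((inner ℝ x ξ : ℝ) : ℂ))
            * (Real.exp (-(4 * Real.pi ^ 2 * α * ‖ξ‖ ^ 2)) : ℝ))
      (nhdsWithin 0 (Set.Ioi 0)) (nhds (f x)) := by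
  let V := EuclideanSpace ℝ (Fin n)
  have key := Real.tendsto_integral_gaussian_smul' hi hf.continuousAt (v := x)
  have hc : Tendsto (fun α : ℝ => (4 * π ^ 2 * α)⁻¹) (nhdsWithin 0 (Set.Ioi 0)) atTop := by
    apply tendsto_inv_nhdsGT_zero.comp
    have h1 : Tendsto (fun α : ℝ => 4 * π ^ 2 * α) (nhdsWithin 0 (Set.Ioi 0)) (nhds 0) := by
      have h2 : Tendsto (fun α : ℝ => 4 * π ^ 2 * α) (nhds 0) (nhds 0) := by
        have := (Continuous.tendsto (by continuity : Continuous (fun α : ℝ => 4 * π ^ 2 * α)) 0)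
        simpa using this
      exact h2.mono_left nhdsWithin_le_nhds
    apply tendsto_nhdsWithin_of_tendsto_nhds_of_eventually_within _ h1
    filter_upwards [self_mem_nhdsWithin] with α (hα : 0 < α)
    have : (0:ℝ) < 4 * π ^ 2 * α := by positivity
    exact this
  have main := key.comp hc
  apply main.congr'
  filter_upwards [self_mem_nhdsWithin] with α (hα : 0 < α)
  set b : ℂ := ((4 * π ^ 2 * α : ℝ) : ℂ) with hbdef
  have hbre : 0 < b.re := by
    rw [hbdef, Complex.ofReal_re]; positivity
  -- Fubini: ∫ 𝓕 f ξ • g ξ = ∫ f y • 𝓕 g y, with g the modulated Gaussian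
  have hg : Integrable (fun ξ : V => cexp (-b * ‖ξ‖ ^ 2 + (2 * π * Complex.I) * ⟪x, ξ⟫)) :=
    GaussianFourier.integrable_cexp_neg_mul_sq_norm_add hbre _ _
  have flip := VectorFourier.integral_fourierIntegral_smul_eq_flip (μ := volume) (ν := volume)
    (L := innerₗ V) Real.continuous_fourierChar continuous_inner hi hg
  have lhs_eq : (∫ ξ : V,
          (∫ y : V, f y * Complex.exp (-(2 * (π : ℂ) * Complex.I * ((inner ℝ y ξ : ℝ) : ℂ))))
            * Complex.exp (2 * (π : ℂ) * Complex.I * ((inner ℝ x ξ : ℝ) : ℂ))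
            * (Real.exp (-(4 * π ^ 2 * α * ‖ξ‖ ^ 2)) : ℝ))
      = ∫ ξ : V, (VectorFourier.fourierIntegral 𝐞 volume (innerₗ V) f ξ)
          • cexp (-b * ‖ξ‖ ^ 2 + (2 * π * Complex.I) * ⟪x, ξ⟫) := by
    congr 1 with ξ
    rw [VectorFourier.fourierIntegral]
    simp only [smul_eq_mul, Submonoid.smul_def, Real.fourierChar_apply, Circle.smul_def]
    rw [mul_assoc]
    congr 1
    · congr 1 with y
      rw [mul_comm]
      congr 2
      push_cast
      simp only [innerₗ_apply_apply]
      ring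
    · rw [Complex.ofReal_exp, ← Complex.exp_add]
      congr 1
      push_cast [hbdef]
      ring
  rw [lhs_eq, flip]
  have hflip : (innerₗ V).flip = innerₗ V :=
    LinearMap.ext fun v => LinearMap.ext fun w => by simp [real_inner_comm]
  rw [hflip]
  simp only [Function.comp_apply]
  refine integral_congr_ae (Filter.Eventually.of_forall fun y => ?_)
  dsimp only
  have four : (VectorFourier.fourierIntegral 𝐞 volume (innerₗ V)
        (fun ξ : V => cexp (-b * ‖ξ‖ ^ 2 + (2 * π * Complex.I) * ⟪x, ξ⟫)) y)
      = (π / b) ^ (Module.finrank ℝ V / 2 : ℂ) * cexp (-π ^ 2 * ‖x - y‖ ^ 2 / b) :=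
    fourier_gaussian_innerProductSpace' hbre x y
  rw [four, smul_eq_mul, smul_eq_mul, mul_comm]
  congr 2
  · rw [hbdef]
    push_cast
    field_simp
    rw [finrank_euclideanSpace_fin]
  · rw [hbdef]
    push_cast
    field_simp
end
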